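/- Frequentist optional stopping under group invariance: under the conditions of strong calibration (τ adapted to the quotient filtration), for all g ∈ G the stopped Bayes factor satisfies E_{P_{0,g}}[β_τ] = 1, hence P_{0,g}(1/β_τ ≤ α) ≤ α for all 0 < α ≤ 1 and all g ∈ G simultaneously. -/

import Mathlib

open MeasureTheory
open scoped ENNReal

/-- Frequentist optional stopping under group invariance (Theorem 2): in the
group-invariant setting with the stopping time `τ` adapted to the quotient filtration,
for all `g ∈ G` the stopped Bayes factor satisfies `E_{P_{0,g}}[β_τ] = 1`, and hence
`P_{0,g}(1/β_τ ≤ α) ≤ α` for all `0 < α ≤ 1`, simultaneously for all `g ∈ G`. -/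
theorem frequentist_optional_stopping_group_invariance
    {Ω 𝒰 G : Type*} [MeasurableSpace Ω] [MeasurableSpace 𝒰]
    (P0 P1 : G → Measure Ω)
    [∀ g, IsProbabilityMeasure (P0 g)] [∀ g, IsProbabilityMeasure (P1 g)]
    (U : ℕ → Ω → 𝒰) (hU : ∀ n, Measurable (U n))
    (β : ℕ → Ω → ℝ≥0∞) (hβmeas : ∀ n, Measurable (β n)) (hβpos : ∀ n ω, 0 < β n ω)
    (hBerger : ∀ g n, ∃ h : 𝒰 → ℝ≥0∞, Measurable h ∧
      Measure.map (U n) (P1 g) = (Measure.map (U n) (P0 g)).withDensity h ∧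
      ∀ ω, h (U n ω) = β n ω)
    (τ : Ω → ℕ) (hτmeas : Measurable τ)
    (hτadapted : ∀ n,
      MeasurableSet[MeasurableSpace.comap (U n) inferInstance] {ω | τ ω = n}) :
    ∀ g, (∫⁻ ω, β (τ ω) ω ∂(P0 g)) = 1 ∧
      ∀ α : ℝ≥0∞, 0 < α → α ≤ 1 → P0 g {ω | (β (τ ω) ω)⁻¹ ≤ α} ≤ α := by
  -- measurability of the stopped process
  have hF : Measurable fun ω => β (τ ω) ω := by
    have h1 : Measurable fun p : Ω × ℕ => β p.2 p.1 :=
      measurable_from_prod_countable_left fun n => hβmeas n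
    exact h1.comp (measurable_id.prodMk hτmeas)
  have hτset : ∀ n, MeasurableSet {ω | τ ω = n} := fun n =>
    hτmeas (measurableSet_singleton n)
  have hdisj : Pairwise (Function.onFun Disjoint fun n => {ω | τ ω = n}) := by
    intro m n hmn
    refine Set.disjoint_left.2 fun ω hm hn => hmn ?_
    simp only [Set.mem_setOf_eq] at hm hn
    rw [← hm, ← hn]
  have hcover : (⋃ n, {ω | τ ω = n}) = Set.univ := by
    ext ω; simp
  intro g
  have hkey : ∀ n, (∫⁻ ω in {ω | τ ω = n}, β n ω ∂(P0 g)) = P1 g {ω | τ ω = n} := by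
    intro n
    obtain ⟨h, hhmeas, hdens, hval⟩ := hBerger g n
    obtain ⟨S, hS, hSpre⟩ := hτadapted n
    have e1 : (∫⁻ ω in {ω | τ ω = n}, β n ω ∂(P0 g))
        = ∫⁻ ω in U n ⁻¹' S, h (U n ω) ∂(P0 g) := by
      rw [← hSpre]
      exact setLIntegral_congr_fun ((hU n) hS) (fun ω _ => (hval ω).symm)
    rw [e1, ← setLIntegral_map hS hhmeas (hU n), ← withDensity_apply h hS, ← hdens,
      Measure.map_apply (hU n) hS, hSpre]
  have hint : (∫⁻ ω, β (τ ω) ω ∂(P0 g)) = 1 := by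
    have : (∫⁻ ω, β (τ ω) ω ∂(P0 g))
        = ∑' n, ∫⁻ ω in {ω | τ ω = n}, β (τ ω) ω ∂(P0 g) := by
      rw [← lintegral_iUnion hτset hdisj, hcover, Measure.restrict_univ]
    rw [this]
    have heach : ∀ n, (∫⁻ ω in {ω | τ ω = n}, β (τ ω) ω ∂(P0 g))
        = P1 g {ω | τ ω = n} := by
      intro n
      rw [← hkey n]
      exact setLIntegral_congr_fun (hτset n)
        (fun ω hω => by rw [Set.mem_setOf_eq.mp hω])
    simp_rw [heach]
    rw [← measure_iUnion hdisj hτset, hcover]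
    exact measure_univ
  refine ⟨hint, fun α hα0 hα1 => ?_⟩
  have hαne : α ≠ 0 := hα0.ne'
  have hαtop : α ≠ ∞ := (hα1.trans_lt ENNReal.one_lt_top).ne
  have hset : {ω | (β (τ ω) ω)⁻¹ ≤ α} = {ω | α⁻¹ ≤ β (τ ω) ω} := by
    ext ω
    simp only [Set.mem_setOf_eq]
    exact ENNReal.inv_le_iff_inv_le
  have hmarkov := mul_meas_ge_le_lintegral₀ (μ := P0 g) hF.aemeasurable α⁻¹
  rw [hint] at hmarkov
  rw [hset]
  calc P0 g {ω | α⁻¹ ≤ β (τ ω) ω}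
      = α * (α⁻¹ * P0 g {ω | α⁻¹ ≤ β (τ ω) ω}) := by
        rw [← mul_assoc, ENNReal.mul_inv_cancel hαne hαtop, one_mul]
    _ ≤ α * 1 := mul_le_mul_right hmarkov α
    _ = α := mul_one α
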